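/- Let r ∈ ℕ with r ≥ 2 and t > 0. Consider the infinite trihedral angle with dihedral angles (θ₁₂, θ₂₃, θ₃₁) = (π/r, π/2, π/2), parametrized in cylindrical coordinates as {(ρ, θ, z) : ρ > 0, 0 < θ < π/r, z > 0}. Then the contribution of the group elements (R_{a₁}·R_{a₂})^k · R_{a₃}, k = 1, …, r−1 (the elements of C′_r × {R_{a₃}}) to the constant term of the Dirichlet partition function equals I_const(r) = − ∫₀^∞ ∫₀^{π/r} ∫₀^∞ (1/(4πt)) ( Σ_{k=1}^{r−1} exp(−(ρ²/t) sin²(kπ/r)) ) · (1/√(4πt)) exp(−z²/t) · ρ dρ dθ dz = −(1/(32r)) Σ_{k=1}^{r−1} 1/sin²(kπ/r) = −(r² − 1)/(96r); in particular the value is independent of t. -/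

import Mathlib

open Real MeasureTheory

section TrihedralHelpers

open Complex Finset

private lemma sum_id_pow' (z : ℂ) (n : ℕ) :
    (1 - z) * ∑ j ∈ range n, (j:ℂ) * z^j
      = (∑ j ∈ range n, z^j) - 1 - ((n:ℂ) - 1) * z^n := by
  induction n with
  | zero => simp
  | succ n ih =>
    rw [sum_range_succ, sum_range_succ]
    push_cast
    linear_combination ih

private lemma sum_range_cast' (n : ℕ) : ∑ i ∈ range n, (i:ℂ) = n*(n-1)/2 := by
  induction n with
  | zero => simp
  | succ n ih => rw [sum_range_succ]; push_cast; linear_combination ih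

private lemma sum_range_sq_cast' (n : ℕ) : ∑ i ∈ range n, (i:ℂ)^2 = n*(n-1)*(2*n-1)/6 := by
  induction n with
  | zero => simp
  | succ n ih => rw [sum_range_succ]; push_cast; linear_combination ih

private lemma zeta_pow' (r : ℕ) (hr0 : (r:ℕ) ≠ 0) : (Complex.exp (2*π*Complex.I/r))^r = 1 :=
  (Complex.isPrimitiveRoot_exp r hr0).pow_eq_one

private lemma csc_sq_eq' (r : ℕ) (k : ℕ) (hk : k ∈ Finset.Icc 1 (r-1)) (hr' : 2 ≤ r) :
    ((1 / Real.sin ((k:ℝ)*π/r)^2 : ℝ) : ℂ)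
      = -4 * (Complex.exp (2*π*Complex.I/r))^k
          * (∑ j ∈ range r, (j:ℂ) * ((Complex.exp (2*π*Complex.I/r))^k)^j)^2 / (r:ℂ)^2 := by
  have hr0 : (r:ℕ) ≠ 0 := by omega
  have hrC : (r:ℂ) ≠ 0 := Nat.cast_ne_zero.mpr hr0
  have hrR : (0:ℝ) < r := by positivity
  simp only [Finset.mem_Icc] at hk
  set θ : ℝ := (k:ℝ)*π/r with hθ
  have hθ1 : 0 < θ := by
    apply div_pos (mul_pos _ Real.pi_pos) hrR
    exact_mod_cast Nat.pos_of_ne_zero (by omega)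
  have hθ2 : θ < π := by
    rw [hθ, div_lt_iff₀ hrR]
    have : (k:ℝ) < r := by exact_mod_cast (by omega : k < r)
    nlinarith [Real.pi_pos]
  have hs : Real.sin θ ≠ 0 := ne_of_gt (Real.sin_pos_of_pos_of_lt_pi hθ1 hθ2)
  set ζ : ℂ := Complex.exp (2*π*Complex.I/r) with hζ
  set e : ℂ := Complex.exp (θ*Complex.I) with he
  have he0 : e ≠ 0 := Complex.exp_ne_zero _
  have hz : ζ^k = e^2 := by
    rw [hζ, he, ← Complex.exp_nat_mul, ← Complex.exp_nat_mul]
    congr 1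
    push_cast [hθ]
    field_simp
  have hz1 : ζ^k ≠ 1 := by
    intro h
    have h2 := (Complex.isPrimitiveRoot_exp r hr0).pow_eq_one_iff_dvd k |>.mp h
    have := Nat.le_of_dvd (by omega) h2
    omega
  have hsin : (Real.sin θ : ℂ) = (e⁻¹ - e) * Complex.I / 2 := by
    rw [Complex.ofReal_sin, Complex.sin, he, ← Complex.exp_neg]
    ring_nf
  have hgeom : ∑ j ∈ range r, (ζ^k)^j = 0 := by
    rw [geom_sum_eq hz1]
    have : (ζ^k)^r = 1 := by rw [← pow_mul, mul_comm, pow_mul, zeta_pow' r hr0, one_pow]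
    simp [this]
  have hA : (∑ j ∈ range r, (j:ℂ) * (ζ^k)^j) * (ζ^k - 1) = r := by
    have := sum_id_pow' (ζ^k) r
    rw [hgeom] at this
    have hzr : (ζ^k)^r = 1 := by rw [← pow_mul, mul_comm, pow_mul, zeta_pow' r hr0, one_pow]
    rw [hzr] at this
    linear_combination -this
  have hkey : (ζ^k - 1)^2 = -4 * ζ^k * ((Real.sin θ : ℝ):ℂ)^2 := by
    rw [hz, hsin]
    field_simp
    ring_nf
    simp only [Complex.I_sq]
    ring
  have hsC : ((Real.sin θ : ℝ):ℂ) ≠ 0 := by exact_mod_cast Complex.ofReal_ne_zero.mpr hs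
  have h2 : (∑ j ∈ range r, (j:ℂ) * (ζ^k)^j)^2 * (-4 * ζ^k * ((Real.sin θ:ℝ):ℂ)^2) = (r:ℂ)^2 := by
    rw [← hkey]
    linear_combination ((∑ j ∈ range r, (j:ℂ) * (ζ^k)^j) * (ζ^k - 1) + (r:ℂ)) * hA
  rw [Complex.ofReal_div, Complex.ofReal_one, Complex.ofReal_pow]
  rw [div_eq_div_iff (pow_ne_zero 2 hsC) (pow_ne_zero 2 hrC)]
  linear_combination -h2

private lemma root_sum_eval' (r : ℕ) (hr : 2 ≤ r) (m : ℕ) :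
    ∑ k ∈ Finset.Icc 1 (r-1), (Complex.exp (2*π*Complex.I/r))^(k*m)
      = if r ∣ m then (r:ℂ) - 1 else -1 := by
  have hr0 : r ≠ 0 := by omega
  set ζ : ℂ := Complex.exp (2*π*Complex.I/r) with hζ
  have hprim := Complex.isPrimitiveRoot_exp r hr0
  have hins : Finset.range r = insert 0 (Finset.Icc 1 (r-1)) := by
    ext x; simp [Finset.mem_range, Finset.mem_Icc, Finset.mem_insert]; omega
  by_cases hdvd : r ∣ m
  · have h1 : ∀ k, ζ^(k*m) = 1 := by
      intro k
      rw [mul_comm, pow_mul, (hprim.pow_eq_one_iff_dvd m).mpr hdvd, one_pow]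
    simp only [h1, Finset.sum_const, nsmul_eq_mul, mul_one, if_pos hdvd]
    rw [Nat.card_Icc]
    push_cast [Nat.sub_add_cancel (by omega : 1 ≤ r)]
    rw [Nat.cast_sub (by omega : 1 ≤ r)]
    push_cast; ring
  · have hzm : ζ^m ≠ 1 := fun h => hdvd ((hprim.pow_eq_one_iff_dvd m).mp h)
    have hrange : ∑ k ∈ Finset.range r, (ζ^m)^k = 0 := by
      rw [geom_sum_eq hzm]
      have : (ζ^m)^r = 1 := by
        rw [← pow_mul, mul_comm, pow_mul, hprim.pow_eq_one, one_pow]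
      simp [this]
    rw [hins, Finset.sum_insert (by simp)] at hrange
    simp only [pow_zero] at hrange
    rw [if_neg hdvd]
    have : ∀ k, ζ^(k*m) = (ζ^m)^k := by intro k; rw [← pow_mul, mul_comm]
    simp only [this]
    linear_combination hrange

private lemma big_sum_eval' (r : ℕ) (hr : 2 ≤ r)
    (hroot : ∀ m : ℕ, ∑ k ∈ Finset.Icc 1 (r-1), (Complex.exp (2*π*Complex.I/r))^(k*m)
      = if r ∣ m then (r:ℂ) - 1 else -1) :
    ∑ k ∈ Finset.Icc 1 (r-1),
      (-4 * (Complex.exp (2*π*Complex.I/r))^k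
        * (∑ j ∈ range r, (j:ℂ) * ((Complex.exp (2*π*Complex.I/r))^k)^j)^2 / (r:ℂ)^2)
      = ((r:ℂ)^2 - 1)/3 := by
  have hr0 : (r:ℂ) ≠ 0 := Nat.cast_ne_zero.mpr (by omega)
  set ζ : ℂ := Complex.exp (2*π*Complex.I/r) with hζ
  have hexp : ∀ k : ℕ, ζ^k * (∑ j ∈ range r, (j:ℂ)*(ζ^k)^j)^2
      = ∑ i ∈ range r, ∑ j ∈ range r, (i:ℂ)*(j:ℂ)*ζ^(k*(i+j+1)) := by
    intro k
    rw [sq, Finset.sum_mul_sum, Finset.mul_sum]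
    refine Finset.sum_congr rfl fun i _ => ?_
    rw [Finset.mul_sum]
    refine Finset.sum_congr rfl fun j _ => ?_
    rw [← pow_mul, ← pow_mul,
      show k*(i+j+1) = k + (k*i + k*j) by ring, pow_add, pow_add]
    ring
  have step1 : ∑ k ∈ Finset.Icc 1 (r-1),
      (-4 * ζ^k * (∑ j ∈ range r, (j:ℂ)*(ζ^k)^j)^2 / (r:ℂ)^2)
      = (-4/(r:ℂ)^2) * ∑ k ∈ Finset.Icc 1 (r-1),
          ∑ i ∈ range r, ∑ j ∈ range r, (i:ℂ)*(j:ℂ)*ζ^(k*(i+j+1)) := by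
    rw [Finset.mul_sum]
    refine Finset.sum_congr rfl fun k _ => ?_
    rw [← hexp k]
    ring
  rw [step1]
  have swap : ∑ k ∈ Finset.Icc 1 (r-1), ∑ i ∈ range r, ∑ j ∈ range r,
        (i:ℂ)*(j:ℂ)*ζ^(k*(i+j+1))
      = ∑ i ∈ range r, ∑ j ∈ range r, (i:ℂ)*(j:ℂ) *
          ∑ k ∈ Finset.Icc 1 (r-1), ζ^(k*(i+j+1)) := by
    rw [Finset.sum_comm]
    refine Finset.sum_congr rfl fun i _ => ?_
    rw [Finset.sum_comm]
    refine Finset.sum_congr rfl fun j _ => ?_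
    rw [Finset.mul_sum]
  rw [swap]
  have inner : ∑ i ∈ range r, ∑ j ∈ range r, (i:ℂ)*(j:ℂ) *
        ∑ k ∈ Finset.Icc 1 (r-1), ζ^(k*(i+j+1))
      = (r:ℂ) * (∑ i ∈ range r, (i:ℂ)*((r:ℂ)-1-(i:ℂ)))
        - (∑ i ∈ range r, (i:ℂ))^2 := by
    have per : ∀ i ∈ range r, ∑ j ∈ range r, (i:ℂ)*(j:ℂ) *
          ∑ k ∈ Finset.Icc 1 (r-1), ζ^(k*(i+j+1))
        = (r:ℂ) * ((i:ℂ)*((r:ℂ)-1-(i:ℂ))) - (i:ℂ) * ∑ j ∈ range r, (j:ℂ) := by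
      intro i hi
      have hi' : i < r := Finset.mem_range.mp hi
      have key : ∀ j ∈ range r, (i:ℂ)*(j:ℂ) * ∑ k ∈ Finset.Icc 1 (r-1), ζ^(k*(i+j+1))
          = (if j = r-1-i then (r:ℂ) * ((i:ℂ)*(j:ℂ)) else 0) - (i:ℂ)*(j:ℂ) := by
        intro j hj
        have hj' : j < r := Finset.mem_range.mp hj
        rw [hroot (i+j+1)]
        by_cases h : j = r-1-i
        · have : r ∣ (i+j+1) := by rw [show i+j+1 = r by omega]
          rw [if_pos this, if_pos h]; ring
        · have : ¬ r ∣ (i+j+1) := by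
            intro hd
            obtain ⟨c, hc⟩ := hd
            rcases Nat.lt_or_ge c 2 with hc2 | hc2
            · interval_cases c <;> omega
            · have := Nat.mul_le_mul_left r hc2
              omega
          rw [if_neg this, if_neg h]; ring
      rw [Finset.sum_congr rfl key, Finset.sum_sub_distrib,
        Finset.sum_ite_eq' (range r) (r-1-i) (fun j => (r:ℂ) * ((i:ℂ)*(j:ℂ)))]
      rw [if_pos (Finset.mem_range.mpr (by omega : r-1-i < r))]
      rw [← Finset.mul_sum]
      have : ((r-1-i : ℕ) : ℂ) = (r:ℂ)-1-(i:ℂ) := by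
        push_cast [Nat.cast_sub (by omega : i ≤ r-1), Nat.cast_sub (by omega : 1 ≤ r)]
        ring
      rw [this]
    rw [Finset.sum_congr rfl per, Finset.sum_sub_distrib, ← Finset.mul_sum, ← Finset.sum_mul, sq]
  rw [inner]
  have e1 : ∑ i ∈ range r, (i:ℂ)*((r:ℂ)-1-(i:ℂ))
      = ((r:ℂ)-1) * ((r:ℂ)*((r:ℂ)-1)/2) - (r:ℂ)*((r:ℂ)-1)*(2*(r:ℂ)-1)/6 := by
    have : ∀ i ∈ range r, (i:ℂ)*((r:ℂ)-1-(i:ℂ)) = ((r:ℂ)-1)*(i:ℂ) - (i:ℂ)^2 := by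
      intro i _; ring
    rw [Finset.sum_congr rfl this, Finset.sum_sub_distrib, ← Finset.mul_sum,
      sum_range_cast', sum_range_sq_cast']
  rw [e1, sum_range_cast']
  field_simp
  ring

private lemma sum_csc' (r : ℕ) (hr : 2 ≤ r) :
    ∑ k ∈ Finset.Icc 1 (r-1), 1 / Real.sin ((k:ℝ)*π/r)^2 = ((r:ℝ)^2-1)/3 := by
  have key : ((∑ k ∈ Finset.Icc 1 (r-1), 1 / Real.sin ((k:ℝ)*π/r)^2 : ℝ) : ℂ)
      = ((((r:ℝ)^2-1)/3 : ℝ) : ℂ) := by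
    rw [Complex.ofReal_sum]
    rw [Finset.sum_congr rfl (fun k hk => csc_sq_eq' r k hk hr)]
    rw [big_sum_eval' r hr (root_sum_eval' r hr)]
    push_cast
    ring
  exact_mod_cast key

private lemma intg_mul_exp' (b : ℝ) (hb : 0 < b) :
    ∫ x in Set.Ioi (0:ℝ), x * Real.exp (-b * x^2) = (2*b)⁻¹ := by
  have A : ∀ x : ℝ, HasDerivAt (fun x : ℝ => -(2*b)⁻¹ * Real.exp (-b * x^2))
      (x * Real.exp (-b * x^2)) x := by
    intro x
    convert ((hasDerivAt_pow 2 x).const_mul (-b)).exp.const_mul (-(2*b)⁻¹) using 1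
    · rfl
    · rfl
    field_simp
    ring
  have B : Filter.Tendsto (fun y : ℝ => -(2*b)⁻¹ * Real.exp (-b * y^2))
      Filter.atTop (nhds (-(2*b)⁻¹ * 0)) := by
    refine Filter.Tendsto.const_mul _ ?_
    exact Real.tendsto_exp_atBot.comp
      ((Filter.tendsto_pow_atTop two_ne_zero).const_mul_atTop_of_neg (neg_lt_zero.2 hb))
  have := MeasureTheory.integral_Ioi_of_hasDerivAt_of_tendsto' (a := (0:ℝ)) (fun x _ => A x)
      (integrable_mul_exp_neg_mul_sq hb).integrableOn B
  rw [this]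
  norm_num

private lemma sin_pos_of_mem' (r : ℕ) (hr : 2 ≤ r) {k : ℕ} (hk : k ∈ Finset.Icc 1 (r-1)) :
    0 < Real.sin ((k:ℝ)*π/r) := by
  simp only [Finset.mem_Icc] at hk
  have hrR : (0:ℝ) < r := by positivity
  apply Real.sin_pos_of_pos_of_lt_pi
  · apply div_pos (mul_pos _ Real.pi_pos) hrR
    exact_mod_cast Nat.pos_of_ne_zero (by omega)
  · rw [div_lt_iff₀ hrR]
    have : (k:ℝ) < r := by exact_mod_cast (by omega : k < r)
    nlinarith [Real.pi_pos]

private lemma integral_part' (r : ℕ) (t : ℝ) (hr : 2 ≤ r) (ht : 0 < t) :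
    (∫ z in Set.Ioi (0:ℝ),
        ∫ θ in (0:ℝ)..(Real.pi / r),
          ∫ ρ in Set.Ioi (0:ℝ),
            (1 / (4 * Real.pi * t)) *
                (∑ k ∈ Finset.Icc 1 (r - 1),
                  Real.exp (-(ρ ^ 2 / t) * Real.sin ((k : ℝ) * Real.pi / r) ^ 2)) *
              ((1 / Real.sqrt (4 * Real.pi * t)) * Real.exp (-z ^ 2 / t)) * ρ) =
      (1 / (32 * (r : ℝ))) *
        (∑ k ∈ Finset.Icc 1 (r - 1), 1 / Real.sin ((k : ℝ) * Real.pi / r) ^ 2) := by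
  have hrR : (0:ℝ) < r := by positivity
  set S : ℝ := ∑ k ∈ Finset.Icc 1 (r - 1), 1 / Real.sin ((k : ℝ) * Real.pi / r) ^ 2 with hS
  set c : ℝ := (1 / (4 * Real.pi * t)) * (1 / Real.sqrt (4 * Real.pi * t)) * ((t/2) * S) with hc
  have hinner : ∀ z : ℝ,
      (∫ ρ in Set.Ioi (0:ℝ),
        (1 / (4 * Real.pi * t)) *
            (∑ k ∈ Finset.Icc 1 (r - 1),
              Real.exp (-(ρ ^ 2 / t) * Real.sin ((k : ℝ) * Real.pi / r) ^ 2)) *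
          ((1 / Real.sqrt (4 * Real.pi * t)) * Real.exp (-z ^ 2 / t)) * ρ)
      = c * Real.exp (-z^2/t) := by
    intro z
    have hpt : ∀ ρ : ℝ,
        (1 / (4 * Real.pi * t)) *
            (∑ k ∈ Finset.Icc 1 (r - 1),
              Real.exp (-(ρ ^ 2 / t) * Real.sin ((k : ℝ) * Real.pi / r) ^ 2)) *
          ((1 / Real.sqrt (4 * Real.pi * t)) * Real.exp (-z ^ 2 / t)) * ρ
        = ∑ k ∈ Finset.Icc 1 (r - 1),
            ((1 / (4 * Real.pi * t)) * ((1 / Real.sqrt (4 * Real.pi * t)) * Real.exp (-z ^ 2 / t)))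
              * (ρ * Real.exp (-(Real.sin ((k : ℝ) * Real.pi / r) ^ 2 / t) * ρ^2)) := by
      intro ρ
      rw [Finset.mul_sum, Finset.sum_mul, Finset.sum_mul]
      refine Finset.sum_congr rfl fun k _ => ?_
      rw [show -(ρ ^ 2 / t) * Real.sin ((k : ℝ) * Real.pi / r) ^ 2
          = -(Real.sin ((k : ℝ) * Real.pi / r) ^ 2 / t) * ρ^2 by ring]
      ring
    rw [MeasureTheory.integral_congr_ae (Filter.Eventually.of_forall hpt)]
    rw [MeasureTheory.integral_finset_sum _ (fun k hk => ?_)]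
    · have : ∀ k ∈ Finset.Icc 1 (r-1),
          (∫ ρ in Set.Ioi (0:ℝ),
            ((1 / (4 * Real.pi * t)) * ((1 / Real.sqrt (4 * Real.pi * t)) * Real.exp (-z ^ 2 / t)))
              * (ρ * Real.exp (-(Real.sin ((k : ℝ) * Real.pi / r) ^ 2 / t) * ρ^2)))
          = ((1 / (4 * Real.pi * t)) * ((1 / Real.sqrt (4 * Real.pi * t)) * Real.exp (-z ^ 2 / t)))
              * ((t/2) * (1 / Real.sin ((k : ℝ) * Real.pi / r) ^ 2)) := by
        intro k hk
        have hsin := sin_pos_of_mem' r hr hk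
        have ha : 0 < Real.sin ((k : ℝ) * Real.pi / r) ^ 2 / t := by positivity
        rw [MeasureTheory.integral_const_mul, intg_mul_exp' _ ha]
        field_simp
      rw [Finset.sum_congr rfl this, ← Finset.mul_sum, ← Finset.mul_sum, ← hS, hc]
      ring
    · have hsin := sin_pos_of_mem' r hr hk
      have ha : 0 < Real.sin ((k : ℝ) * Real.pi / r) ^ 2 / t := by positivity
      exact ((integrable_mul_exp_neg_mul_sq ha).integrableOn).const_mul _
  have hmid : ∀ z : ℝ,
      (∫ θ in (0:ℝ)..(Real.pi / r),
        ∫ ρ in Set.Ioi (0:ℝ),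
          (1 / (4 * Real.pi * t)) *
              (∑ k ∈ Finset.Icc 1 (r - 1),
                Real.exp (-(ρ ^ 2 / t) * Real.sin ((k : ℝ) * Real.pi / r) ^ 2)) *
            ((1 / Real.sqrt (4 * Real.pi * t)) * Real.exp (-z ^ 2 / t)) * ρ)
      = (Real.pi / r) * (c * Real.exp (-z^2/t)) := by
    intro z
    rw [intervalIntegral.integral_congr (g := fun _ => c * Real.exp (-z^2/t))
      (fun θ _ => hinner z), intervalIntegral.integral_const, smul_eq_mul, sub_zero]
  rw [MeasureTheory.integral_congr_ae (Filter.Eventually.of_forall hmid)]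
  have hz : ∀ z : ℝ, (Real.pi / r) * (c * Real.exp (-z^2/t))
      = ((Real.pi / r) * c) * Real.exp (-(1/t) * z^2) := by
    intro z; rw [show -z^2/t = -(1/t)*z^2 by ring]; ring
  rw [MeasureTheory.integral_congr_ae (Filter.Eventually.of_forall hz),
    MeasureTheory.integral_const_mul, integral_gaussian_Ioi]
  have hsqrt : Real.sqrt (4 * Real.pi * t) = 2 * Real.sqrt (Real.pi * t) := by
    rw [show 4 * Real.pi * t = 2^2 * (Real.pi * t) by ring,
      Real.sqrt_mul (by positivity), Real.sqrt_sq (by norm_num)]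
  have hsqrt2 : Real.sqrt (Real.pi / (1/t)) = Real.sqrt (Real.pi * t) := by
    rw [show Real.pi / (1/t) = Real.pi * t by field_simp]
  rw [hsqrt2, hc, hsqrt]
  have hps : 0 < Real.sqrt (Real.pi * t) := Real.sqrt_pos.mpr (by positivity)
  have hsq : Real.sqrt (Real.pi * t) ^ 2 = Real.pi * t := Real.sq_sqrt (by positivity)
  field_simp
  nlinarith [hsq, Real.pi_pos, hps]

end TrihedralHelpers

/-- For the infinite trihedral angle `(2,2,r)` with dihedral angles `(π/r, π/2, π/2)`,
the contribution of the elements of `C′_r × {R_{a₃}}` to the constant term of the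
Dirichlet partition function is
`I_const(r) = −∫₀^∞∫₀^{π/r}∫₀^∞ (1/(4πt)) Σ_{k=1}^{r−1} exp(−(ρ²/t) sin²(kπ/r)) ·
 (1/√(4πt)) exp(−z²/t) ρ dρ dθ dz = −(1/(32r)) Σ_{k=1}^{r−1} 1/sin²(kπ/r) = −(r²−1)/(96r)`,
independently of `t`. -/
theorem trihedral_constant_term (r : ℕ) (hr : 2 ≤ r) (t : ℝ) (ht : 0 < t) :
    -(∫ z in Set.Ioi (0:ℝ),
        ∫ θ in (0:ℝ)..(Real.pi / r),
          ∫ ρ in Set.Ioi (0:ℝ),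
            (1 / (4 * Real.pi * t)) *
                (∑ k ∈ Finset.Icc 1 (r - 1),
                  Real.exp (-(ρ ^ 2 / t) * Real.sin ((k : ℝ) * Real.pi / r) ^ 2)) *
              ((1 / Real.sqrt (4 * Real.pi * t)) * Real.exp (-z ^ 2 / t)) * ρ) =
      -(1 / (32 * (r : ℝ))) *
        (∑ k ∈ Finset.Icc 1 (r - 1), 1 / Real.sin ((k : ℝ) * Real.pi / r) ^ 2) ∧
    -(1 / (32 * (r : ℝ))) *
        (∑ k ∈ Finset.Icc 1 (r - 1), 1 / Real.sin ((k : ℝ) * Real.pi / r) ^ 2) =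
      -(((r : ℝ) ^ 2 - 1) / (96 * r)) := by
  have hrR : (r:ℝ) ≠ 0 := by positivity
  constructor
  · rw [integral_part' r t hr ht]
    ring
  · rw [sum_csc' r hr, neg_mul]
    congr 1
    rw [div_mul_div_comm, one_mul]
    congr 1
    ring
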